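/- One-sided Death Leaps Principle: If X is a Toads and Frogs position in which every legal move of Left (the Toad player) is a jump, and X contains no two consecutive empty squares, then the game value of X is ≤ 0. -/

import Mathlib

universe u

namespace SetTheory

/-- Pre-games, as in Mathlib before they were removed (Mathlib's old `SetTheory.PGame`). -/
inductive PGame : Type (u + 1)
  | mk : ∀ α β : Type u, (α → PGame) → (β → PGame) → PGame

namespace PGame

instance : Zero PGame := ⟨⟨PEmpty, PEmpty, PEmpty.elim, PEmpty.elim⟩⟩

/-- Negation of a pre-game: swap the roles of Left and Right. -/
def neg : PGame → PGame
  | ⟨l, r, L, R⟩ => ⟨r, l, fun i => neg (R i), fun i => neg (L i)⟩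

instance : Neg PGame := ⟨neg⟩

/-- `leAux x y = (x ≤ y, y ≤ x)`, by nested structural recursion; `x ≤ y` iff no Left
option `xL i` satisfies `y ≤ xL i` and no Right option `yR j` satisfies `yR j ≤ x`. -/
noncomputable def leAux : PGame → PGame → Prop × Prop :=
  fun x => PGame.rec (motive := fun _ => PGame → Prop × Prop)
    (fun xl xr xL xR IHl IHr y => PGame.rec (motive := fun _ => Prop × Prop)
      (fun yl yr yL yR IHyl IHyr =>
        ((∀ i, ¬ (IHl i (mk yl yr yL yR)).2) ∧ ∀ j, ¬ (IHyr j).2,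
         (∀ i, ¬ (IHyl i).1) ∧ ∀ j, ¬ (IHr j (mk yl yr yL yR)).1)) y) x

noncomputable instance : LE PGame := ⟨fun x y => (leAux x y).1⟩

end PGame

end SetTheory

open SetTheory

inductive Cell : Type
  | T | F | E
deriving DecidableEq

/-- Positions reachable from `l` by a single Toad (Left) move:
a Toad steps right into an empty square, or jumps over one adjacent Frog
into the empty square beyond. -/
def toadMoves : List Cell → List (List Cell)
  | [] => []
  | c :: rest =>
    (match c, rest with
     | Cell.T, Cell.E :: r => [Cell.E :: Cell.T :: r]
     | Cell.T, Cell.F :: Cell.E :: r => [Cell.E :: Cell.F :: Cell.T :: r]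
     | _, _ => []) ++ (toadMoves rest).map (c :: ·)

/-- Positions reachable from `l` by a single Frog (Right) move. -/
def frogMoves : List Cell → List (List Cell)
  | [] => []
  | c :: rest =>
    (match c, rest with
     | Cell.E, Cell.F :: r => [Cell.F :: Cell.E :: r]
     | Cell.E, Cell.T :: Cell.F :: r => [Cell.F :: Cell.T :: Cell.E :: r]
     | _, _ => []) ++ (frogMoves rest).map (c :: ·)

/-- A weight which strictly decreases with every legal move: each Toad
contributes the number of squares strictly to its right, each Frog the number
of squares strictly to its left. -/
def wt : List Cell → ℕ
  | [] => 0
  | c :: rest =>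
    (if c = Cell.T then rest.length else 0) + rest.countP (· = Cell.F) + wt rest

/-- Game tree with fuel; since `wt` strictly decreases along moves and
positions of weight `0` have no moves, `gameAux n l` is the true game
tree of `l` whenever `wt l ≤ n`. -/
def gameAux : ℕ → List Cell → PGame
  | 0, _ => 0
  | n + 1, l =>
    PGame.mk {m // m ∈ toadMoves l} {m // m ∈ frogMoves l}
      (fun m => gameAux n m.1) (fun m => gameAux n m.1)

/-- The game (PGame) associated to a Toads and Frogs position. -/
def tfGame (l : List Cell) : PGame := gameAux (wt l + 1) l

/-- The game `{x | y}` with a single Left option `x` and single Right option `y`. -/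
def gmk (x y : PGame) : PGame :=
  PGame.mk PUnit PUnit (fun _ => x) (fun _ => y)

/-- The canonical game of a natural number. -/
def natGame : ℕ → PGame
  | 0 => 0
  | n + 1 => PGame.mk PUnit PEmpty (fun _ => natGame n) (fun x => x.elim)

/-- The canonical game of an integer. -/
def intGame : ℤ → PGame
  | Int.ofNat n => natGame n
  | Int.negSucc n => -natGame (n + 1)

/-- `(TF)^b` : the block `TF` repeated `b` times. -/
def tfBlock (b : ℕ) : List Cell := (List.replicate b [Cell.T, Cell.F]).flatten

lemma wt_append (a b : List Cell) :
    wt (a ++ b) = wt a + wt b + a.countP (· = Cell.T) * b.length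
      + a.length * b.countP (· = Cell.F) := by
  induction a with
  | nil => simp [wt]
  | cons c a ih =>
    cases c <;> simp [wt, List.countP_cons, List.countP_append, ih] <;> ring

def toadHead (c : Cell) (rest : List Cell) : List (List Cell) :=
  match c, rest with
  | Cell.T, Cell.E :: r => [Cell.E :: Cell.T :: r]
  | Cell.T, Cell.F :: Cell.E :: r => [Cell.E :: Cell.F :: Cell.T :: r]
  | _, _ => []

def frogHead (c : Cell) (rest : List Cell) : List (List Cell) :=
  match c, rest with
  | Cell.E, Cell.F :: r => [Cell.F :: Cell.E :: r]
  | Cell.E, Cell.T :: Cell.F :: r => [Cell.F :: Cell.T :: Cell.E :: r]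
  | _, _ => []

lemma toadMoves_cons (c : Cell) (rest : List Cell) :
    toadMoves (c :: rest) = toadHead c rest ++ (toadMoves rest).map (c :: ·) := rfl

lemma frogMoves_cons (c : Cell) (rest : List Cell) :
    frogMoves (c :: rest) = frogHead c rest ++ (frogMoves rest).map (c :: ·) := rfl

lemma toadMoves_sound : ∀ {l m : List Cell}, m ∈ toadMoves l →
    ∃ a b, (l = a ++ Cell.T :: Cell.E :: b ∧ m = a ++ Cell.E :: Cell.T :: b) ∨
           (l = a ++ Cell.T :: Cell.F :: Cell.E :: b ∧
             m = a ++ Cell.E :: Cell.F :: Cell.T :: b) := by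
  intro l
  induction l with
  | nil => simp [toadMoves]
  | cons c rest ih =>
    intro m h
    rw [toadMoves_cons] at h
    rcases List.mem_append.1 h with h | h
    · clear ih
      rcases c with _ | _ | _ <;>
        rcases rest with _ | ⟨_ | _ | _, _ | ⟨_ | _ | _, r⟩⟩ <;>
        simp [toadHead] at h <;>
        subst h <;>
        first
        | exact ⟨[], _, Or.inl ⟨rfl, rfl⟩⟩
        | exact ⟨[], _, Or.inr ⟨rfl, rfl⟩⟩
    · obtain ⟨m', hm', rfl⟩ := List.mem_map.1 h
      obtain ⟨a, b, hc⟩ := ih hm'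
      refine ⟨c :: a, b, ?_⟩
      rcases hc with ⟨h1, h2⟩ | ⟨h1, h2⟩
      · exact Or.inl ⟨by simp [h1], by simp [h2]⟩
      · exact Or.inr ⟨by simp [h1], by simp [h2]⟩

lemma frog_slide (a b : List Cell) :
    (a ++ Cell.F :: Cell.E :: b) ∈ frogMoves (a ++ Cell.E :: Cell.F :: b) := by
  induction a with
  | nil => simp [frogMoves_cons, frogHead, frogMoves]
  | cons c a ih =>
    rw [List.cons_append, List.cons_append, frogMoves_cons]
    exact List.mem_append_right _ (List.mem_map.2 ⟨_, ih, rfl⟩)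

lemma pair_infix_append {x y : Cell} {a b : List Cell} (h : [x, y] <:+: a ++ b) :
    [x, y] <:+: a ∨ [x, y] <:+: b ∨
      ((∃ a', a = a' ++ [x]) ∧ ∃ b', b = y :: b') := by
  induction a with
  | nil => exact Or.inr (Or.inl (by simpa using h))
  | cons c a ih =>
    rw [List.cons_append, List.infix_cons_iff] at h
    rcases h with h | h
    · rw [show ([x, y] : List Cell) = x :: [y] from rfl, List.cons_prefix_cons] at h
      obtain ⟨rfl, h⟩ := h
      rcases a with _ | ⟨d, a⟩
      · obtain ⟨t, ht⟩ := h
        cases b with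
        | nil => simp at ht
        | cons e b =>
          simp at ht
          exact Or.inr (Or.inr ⟨⟨[], rfl⟩, ⟨b, by rw [ht.1]⟩⟩)
      · rw [List.cons_append, List.cons_prefix_cons] at h
        obtain ⟨rfl, _⟩ := h
        exact Or.inl ⟨[], a, rfl⟩
    · rcases ih h with h | h | ⟨⟨a', ha⟩, hb⟩
      · exact Or.inl (List.infix_cons_iff.2 (Or.inr h))
      · exact Or.inr (Or.inl h)
      · exact Or.inr (Or.inr ⟨⟨c :: a', by rw [ha]; rfl⟩, hb⟩)

lemma infix_of_left {p a : List Cell} (h : p <:+: a) (t : List Cell) :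
    p <:+: a ++ t := h.trans (List.prefix_append a t).isInfix

lemma infix_of_right {p t : List Cell} (h : p <:+: t) (a : List Cell) :
    p <:+: a ++ t := h.trans (List.suffix_append a t).isInfix

lemma wt_jump (a b : List Cell) :
    wt (a ++ Cell.T :: Cell.F :: Cell.E :: b)
      = wt (a ++ Cell.E :: Cell.F :: Cell.T :: b) + 2 := by
  have h1 := wt_append a (Cell.T :: Cell.F :: Cell.E :: b)
  have h2 := wt_append a (Cell.E :: Cell.F :: Cell.T :: b)
  simp [wt, List.countP_cons] at h1 h2
  omega

lemma wt_fslide (a b : List Cell) :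
    wt (a ++ Cell.E :: Cell.F :: Cell.T :: b)
      = wt (a ++ Cell.F :: Cell.E :: Cell.T :: b) + 1 := by
  have h1 := wt_append a (Cell.E :: Cell.F :: Cell.T :: b)
  have h2 := wt_append a (Cell.F :: Cell.E :: Cell.T :: b)
  simp [wt, List.countP_cons] at h1 h2
  omega

lemma inv_preserved (a b : List Cell)
    (hT : ¬ [Cell.T, Cell.E] <:+: a ++ Cell.T :: Cell.F :: Cell.E :: b)
    (hE : ¬ [Cell.E, Cell.E] <:+: a ++ Cell.T :: Cell.F :: Cell.E :: b) :
    ¬ [Cell.T, Cell.E] <:+: a ++ Cell.F :: Cell.E :: Cell.T :: b ∧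
    ¬ [Cell.E, Cell.E] <:+: a ++ Cell.F :: Cell.E :: Cell.T :: b := by
  constructor
  · intro h
    rcases pair_infix_append h with h | h | ⟨_, ⟨b', hb⟩⟩
    · exact hT (infix_of_left h _)
    · rw [List.infix_cons_iff] at h
      rcases h with h | h
      · exact Cell.noConfusion (List.cons_prefix_cons.1 h).1
      rw [List.infix_cons_iff] at h
      rcases h with h | h
      · exact Cell.noConfusion (List.cons_prefix_cons.1 h).1
      rw [List.infix_cons_iff] at h
      rcases h with h | h
      · obtain ⟨_, h⟩ := List.cons_prefix_cons.1 h
        obtain ⟨t, ht⟩ := h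
        simp only [List.singleton_append] at ht
        exact hE ⟨a ++ [Cell.T, Cell.F], t, by simp [← ht]⟩
      · exact hT (by simpa using infix_of_right h (a ++ [Cell.T, Cell.F, Cell.E]))
    · simp at hb
  · intro h
    rcases pair_infix_append h with h | h | ⟨_, ⟨b', hb⟩⟩
    · exact hE (infix_of_left h _)
    · rw [List.infix_cons_iff] at h
      rcases h with h | h
      · exact Cell.noConfusion (List.cons_prefix_cons.1 h).1
      rw [List.infix_cons_iff] at h
      rcases h with h | h
      · obtain ⟨_, h⟩ := List.cons_prefix_cons.1 h
        obtain ⟨t, ht⟩ := h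
        simp at ht
      rw [List.infix_cons_iff] at h
      rcases h with h | h
      · exact Cell.noConfusion (List.cons_prefix_cons.1 h).1
      · exact hE (by simpa using infix_of_right h (a ++ [Cell.T, Cell.F, Cell.E]))
    · simp at hb

lemma pg_zero_le_zero : (0 : PGame.{u}) ≤ 0 :=
  And.intro (fun i => PEmpty.elim i) (fun j => PEmpty.elim j)

lemma pg_mk_le_zero_of {α β : Type u} (L : α → PGame.{u}) (R : β → PGame.{u})
    (h : ∀ i, ¬ (PGame.leAux (L i) (0 : PGame.{u})).2) : PGame.mk α β L R ≤ 0 :=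
  And.intro (fun i => h i) (fun j => PEmpty.elim j)

lemma pg_not_zero_le_mk {γ δ : Type u} {L' : γ → PGame.{u}} {R' : δ → PGame.{u}} (j : δ)
    (h : R' j ≤ 0) : ¬ (PGame.leAux (PGame.mk γ δ L' R') (0 : PGame.{u})).2 :=
  fun hh => And.right hh j h

lemma main_ind : ∀ n, ∀ l : List Cell, wt l ≤ n →
    ¬ [Cell.T, Cell.E] <:+: l → ¬ [Cell.E, Cell.E] <:+: l → gameAux n l ≤ 0 := by
  intro n
  induction n using Nat.strong_induction_on with
  | _ n ih =>
    intro l hw hT hE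
    cases n with
    | zero => exact pg_zero_le_zero
    | succ n =>
      rw [gameAux]; apply pg_mk_le_zero_of
      intro i
      obtain ⟨a, b, hc⟩ := toadMoves_sound i.2
      rcases hc with ⟨h1, _⟩ | ⟨h1, h2⟩
      · exact absurd ⟨a, b, by simp [h1]⟩ hT
      · have hwj : wt l = wt (a ++ Cell.E :: Cell.F :: Cell.T :: b) + 2 := by
          rw [h1, wt_jump]
        have hws := wt_fslide a b
        cases n with
        | zero => omega
        | succ n =>
          rw [h1] at hT hE
          obtain ⟨hT', hE'⟩ := inv_preserved a b hT hE
          have hmem := frog_slide a (Cell.T :: b)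
          beta_reduce
          rw [h2, gameAux]
          exact pg_not_zero_le_mk ⟨_, hmem⟩ (ih n (by omega) (a ++ Cell.F :: Cell.E :: Cell.T :: b) (by omega) hT' hE')

/-- **One-sided Death Leaps Principle**: if every legal Left (Toad) move in `X`
is a jump and `X` has no two consecutive empty squares, then `X ≤ 0`. -/
theorem one_sided_death_leaps_principle (X : List Cell)
    (hT : ¬ [Cell.T, Cell.E] <:+: X)
    (hE : ¬ [Cell.E, Cell.E] <:+: X) :
    tfGame X ≤ 0 := by
  exact main_ind _ X (Nat.le_succ _) hT hE
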